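/- Let r ≥ 1 be an integer, let G be a connected simple graph in which every edge lies in a triangle, and let h be a graph homomorphism from the (5^r − 1)-subdivision G^{5^r−1} to the cycle C_{3·5^r}, whose vertices are identified with ℤ/(3·5^r)ℤ with j adjacent to j+1. Then there exists i ∈ ℤ/(3·5^r)ℤ such that h maps every branch vertex of G^{5^r−1} into the set {i, i + 5^r, i + 2·5^r}. -/

import Mathlib

/-- Representatives of internal vertices of the `k`-subdivision of `G`:
a dart `d` of `G` together with a position `i : Fin k`; the pair `(d, i)` is
identified with `(d.symm, k - 1 - i)`. -/
def SubdivRep {V : Type*} (G : SimpleGraph V) (k : ℕ) :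
    G.Dart × Fin k → G.Dart × Fin k → Prop :=
  fun a b => b.1 = a.1.symm ∧ (b.2 : ℕ) = k - 1 - (a.2 : ℕ)

/-- Internal vertices of the `k`-subdivision of `G`. -/
abbrev SubdivInternal {V : Type*} (G : SimpleGraph V) (k : ℕ) :=
  Quot (SubdivRep G k)

/-- Vertices of the `k`-subdivision of `G`: the branch vertices (`Sum.inl`)
are the original vertices of `G`, and `Sum.inr` are the internal vertices. -/
abbrev SubdivVertex {V : Type*} (G : SimpleGraph V) (k : ℕ) :=
  V ⊕ SubdivInternal G k

/-- One-directional adjacency for the `k`-subdivision: a branch vertex `u` is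
adjacent to the first internal vertex of any edge of `G` leaving `u` (via the
identification, also to the last internal vertex of any edge entering `u`),
and consecutive internal vertices on a subdivided edge are adjacent. -/
def SubdivAdjBase {V : Type*} (G : SimpleGraph V) (k : ℕ) :
    SubdivVertex G k → SubdivVertex G k → Prop
  | Sum.inl u, Sum.inr x =>
      ∃ (d : G.Dart) (i : Fin k), (i : ℕ) = 0 ∧ d.toProd.1 = u ∧
        x = Quot.mk (SubdivRep G k) (d, i)
  | Sum.inr x, Sum.inr y =>
      ∃ (d : G.Dart) (i j : Fin k), (j : ℕ) = (i : ℕ) + 1 ∧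
        x = Quot.mk (SubdivRep G k) (d, i) ∧ y = Quot.mk (SubdivRep G k) (d, j)
  | _, _ => False

/-- The `k`-subdivision of a simple graph `G`: every edge `uv` of `G` is
replaced by a path from `u` to `v` through `k` new internal vertices. -/
def Subdivision {V : Type*} (G : SimpleGraph V) (k : ℕ) :
    SimpleGraph (SubdivVertex G k) where
  Adj x y := x ≠ y ∧ (SubdivAdjBase G k x y ∨ SubdivAdjBase G k y x)
  symm := ⟨fun x y h => ⟨Ne.symm h.1, h.2.symm⟩⟩
  loopless := ⟨fun x h => h.1 rfl⟩

/-- The cycle `C_n` with vertex set `ZMod n`, where `j` is adjacent to `j + 1`. -/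
def cycleZMod (n : ℕ) : SimpleGraph (ZMod n) where
  Adj i j := i ≠ j ∧ (j = i + 1 ∨ i = j + 1)
  symm := ⟨fun i j h => ⟨Ne.symm h.1, h.2.symm⟩⟩
  loopless := ⟨fun i h => h.1 rfl⟩

section Aux

variable {V : Type*} {G : SimpleGraph V} {k : ℕ}

lemma subdivRep_symm {a b : G.Dart × Fin k} (hab : SubdivRep G k a b) :
    SubdivRep G k b a := by
  obtain ⟨h1, h2⟩ := hab
  refine ⟨by rw [h1, SimpleGraph.Dart.symm_symm], ?_⟩
  have := a.2.isLt
  omega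

lemma quot_mk_eq_iff (a b : G.Dart × Fin k) :
    Quot.mk (SubdivRep G k) a = Quot.mk (SubdivRep G k) b ↔
      a = b ∨ SubdivRep G k a b := by
  constructor
  · intro hq
    have h := Quot.eq.mp hq
    clear hq
    induction h with
    | rel x y hxy => exact Or.inr hxy
    | refl x => exact Or.inl rfl
    | symm x y _ ih =>
        rcases ih with h | h
        · exact Or.inl h.symm
        · exact Or.inr (subdivRep_symm h)
    | trans x y z _ _ ih1 ih2 =>
        rcases ih1 with h1 | h1
        · rcases ih2 with h2 | h2
          · exact Or.inl (h1.trans h2)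
          · exact Or.inr (h1 ▸ h2)
        · rcases ih2 with h2 | h2
          · exact Or.inr (h2 ▸ h1)
          · left
            obtain ⟨e1, f1⟩ := h1
            obtain ⟨e2, f2⟩ := h2
            have hx := x.2.isLt
            refine Prod.ext ?_ (Fin.ext ?_)
            · rw [e2, e1, SimpleGraph.Dart.symm_symm]
            · omega
  · rintro (rfl | h)
    · rfl
    · exact Quot.sound h

lemma dart_ne_symm (d : G.Dart) : d ≠ d.symm := by
  intro hc
  have h1 : d.toProd.1 = d.symm.toProd.1 := by rw [← hc]
  have h2 : d.symm.toProd.1 = d.toProd.2 := rfl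
  exact G.irrefl (h1.trans h2 ▸ d.adj)

lemma quot_mk_ne (d : G.Dart) (i j : Fin k) (hij : i ≠ j) :
    Quot.mk (SubdivRep G k) (d, i) ≠ Quot.mk (SubdivRep G k) (d, j) := by
  intro hc
  rcases (quot_mk_eq_iff _ _).mp hc with hc | ⟨h1, _⟩
  · exact hij (Prod.ext_iff.mp hc).2
  · exact dart_ne_symm d h1

lemma cycle_step {n : ℕ} {a b : ZMod n} (hab : (cycleZMod n).Adj a b) :
    ∃ e : ℤ, (e = 1 ∨ e = -1) ∧ b = a + e := by
  obtain ⟨-, hc | hc⟩ := hab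
  · exact ⟨1, Or.inl rfl, by rw [hc]; push_cast; ring⟩
  · refine ⟨-1, Or.inr rfl, ?_⟩
    have : b = a - 1 := by rw [hc]; ring
    rw [this]; push_cast; ring

lemma internal_walk {n : ℕ} (h : Subdivision G k →g cycleZMod n) (d : G.Dart) :
    ∀ (i : ℕ) (hi : i < k), ∃ s : ℤ, s.natAbs ≤ i + 1 ∧ (2 : ℤ) ∣ s + i + 1 ∧
      h (Sum.inr (Quot.mk (SubdivRep G k) (d, ⟨i, hi⟩))) =
        h (Sum.inl d.toProd.1) + s := by
  intro i
  induction i with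
  | zero =>
      intro hi
      have hadj : (Subdivision G k).Adj (Sum.inl d.toProd.1)
          (Sum.inr (Quot.mk (SubdivRep G k) (d, ⟨0, hi⟩))) := by
        exact ⟨by simp, Or.inl ⟨d, ⟨0, hi⟩, rfl, rfl, rfl⟩⟩
      obtain ⟨e, he, heq⟩ := cycle_step (h.map_adj hadj)
      refine ⟨e, ?_, ?_, heq⟩ <;> omega
  | succ i ih =>
      intro hi
      have hi' : i < k := by omega
      obtain ⟨s, hs1, hs2, hs3⟩ := ih hi'
      have hne : (⟨i, hi'⟩ : Fin k) ≠ ⟨i + 1, hi⟩ := by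
        intro hc
        have := Fin.mk.injEq i hi' (i+1) hi ▸ hc
        omega
      have hadj : (Subdivision G k).Adj
          (Sum.inr (Quot.mk (SubdivRep G k) (d, ⟨i, hi'⟩)))
          (Sum.inr (Quot.mk (SubdivRep G k) (d, ⟨i + 1, hi⟩))) := by
        refine ⟨fun hc => quot_mk_ne d _ _ hne (Sum.inr.inj hc), Or.inl ?_⟩
        exact ⟨d, ⟨i, hi'⟩, ⟨i + 1, hi⟩, rfl, rfl, rfl⟩
      obtain ⟨e, he, heq⟩ := cycle_step (h.map_adj hadj)
      refine ⟨s + e, by omega, by omega, ?_⟩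
      rw [heq, hs3]
      push_cast
      try ring

lemma dart_diff {n : ℕ} (hk : k ≠ 0) (h : Subdivision G k →g cycleZMod n)
    (d : G.Dart) :
    ∃ s : ℤ, s.natAbs ≤ k + 1 ∧ (2 : ℤ) ∣ s + k + 1 ∧
      h (Sum.inl d.toProd.2) = h (Sum.inl d.toProd.1) + s := by
  have hk1 : k - 1 < k := by omega
  obtain ⟨s, hs1, hs2, hs3⟩ := internal_walk h d (k - 1) hk1
  have hquot : Quot.mk (SubdivRep G k) (d, ⟨k - 1, hk1⟩) =
      Quot.mk (SubdivRep G k) (d.symm, ⟨0, by omega⟩) := by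
    refine Quot.sound ⟨rfl, ?_⟩
    simp
  have hadj : (Subdivision G k).Adj (Sum.inl d.toProd.2)
      (Sum.inr (Quot.mk (SubdivRep G k) (d, ⟨k - 1, hk1⟩))) := by
    refine ⟨by simp, Or.inl ⟨d.symm, ⟨0, by omega⟩, rfl, rfl, hquot⟩⟩
  obtain ⟨e, he, heq⟩ := cycle_step (h.map_adj hadj)
  refine ⟨s - e, by omega, by omega, ?_⟩
  have := heq
  rw [hs3] at this
  have goal : h (Sum.inl d.toProd.2) = h (Sum.inl d.toProd.1) + s - e := by
    have := this.symm
    linear_combination this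
  rw [goal]
  push_cast
  try ring

end Aux

/-- Let `r ≥ 1`, let `G` be a connected graph in which every edge lies in a
triangle, and let `h` be a homomorphism from `G^{5^r - 1}` to `C_{3·5^r}`.
Then there is `i` such that `h` maps every branch vertex into
`{i, i + 5^r, i + 2·5^r}`. -/
theorem statement1 {V : Type*} (r : ℕ) (hr : 1 ≤ r) (G : SimpleGraph V)
    (hconn : G.Connected)
    (htri : ∀ u v : V, G.Adj u v → ∃ z : V, G.Adj u z ∧ G.Adj v z)
    (h : Subdivision G (5 ^ r - 1) →g cycleZMod (3 * 5 ^ r)) :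
    ∃ i : ZMod (3 * 5 ^ r), ∀ u : V,
      h (Sum.inl u) = i ∨ h (Sum.inl u) = i + (5 ^ r : ℕ) ∨
        h (Sum.inl u) = i + 2 * (5 ^ r : ℕ) := by
  have hm5 : (5 : ℕ) ≤ 5 ^ r := by
    calc (5:ℕ) = 5 ^ 1 := by norm_num
    _ ≤ 5 ^ r := Nat.pow_le_pow_right (by norm_num) hr
  have hmodd : 5 ^ r % 2 = 1 := Nat.odd_iff.mp (Odd.pow (by decide))
  have hk0 : 5 ^ r - 1 ≠ 0 := by omega
  -- each edge gives a value s with |s| ≤ 5^r, s odd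
  have edge_diff : ∀ u v : V, G.Adj u v → ∃ s : ℤ, s.natAbs ≤ 5 ^ r ∧
      (2 : ℤ) ∣ s + 5 ^ r ∧ h (Sum.inl v) = h (Sum.inl u) + s := by
    intro u v huv
    obtain ⟨s, hs1, hs2, hs3⟩ := dart_diff hk0 h (⟨(u, v), huv⟩ : G.Dart)
    refine ⟨s, by omega, ?_, hs3⟩
    have : ((5:ℤ) ^ r) = ((5 ^ r : ℕ) : ℤ) := by push_cast; ring
    rw [this]
    omega
  -- using triangles: each edge difference is ± 5^r
  have key : ∀ u v : V, G.Adj u v → ∃ s : ℤ,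
      (s = ((5 ^ r : ℕ) : ℤ) ∨ s = -((5 ^ r : ℕ) : ℤ)) ∧
      h (Sum.inl v) = h (Sum.inl u) + s := by
    intro u v huv
    obtain ⟨z, huz, hvz⟩ := htri u v huv
    obtain ⟨s1, ha1, hb1, hc1⟩ := edge_diff u v huv
    obtain ⟨s2, ha2, hb2, hc2⟩ := edge_diff v z hvz
    obtain ⟨s3, ha3, hb3, hc3⟩ := edge_diff z u huz.symm
    have hsum : ((s1 + s2 + s3 : ℤ) : ZMod (3 * 5 ^ r)) = 0 := by
      rw [hc2, hc1] at hc3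
      push_cast
      linear_combination -hc3
    have hdvd : ((3 * 5 ^ r : ℕ) : ℤ) ∣ s1 + s2 + s3 :=
      (ZMod.intCast_zmod_eq_zero_iff_dvd _ _).mp hsum
    have hcast : ((3 * 5 ^ r : ℕ) : ℤ) = 3 * ((5 ^ r : ℕ) : ℤ) := by push_cast; ring
    have hcast2 : ((5:ℤ) ^ r) = ((5 ^ r : ℕ) : ℤ) := by push_cast; ring
    rw [hcast2] at hb1 hb2 hb3
    rw [hcast] at hdvd
    have hne : s1 + s2 + s3 ≠ 0 := by omega
    have hle : 3 * ((5 ^ r : ℕ) : ℤ) ≤ |s1 + s2 + s3| := by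
      rw [← hcast]
      exact Int.le_of_dvd (abs_pos.mpr hne) ((dvd_abs _ _).mpr (hcast ▸ hdvd))
    rw [Int.abs_eq_natAbs] at hle
    refine ⟨s1, ?_, hc1⟩
    omega
  -- pass to ZMod
  have h3 : ((5 ^ r : ℕ) : ZMod (3 * 5 ^ r)) + ((5 ^ r : ℕ) : ZMod (3 * 5 ^ r)) +
      ((5 ^ r : ℕ) : ZMod (3 * 5 ^ r)) = 0 := by
    have h0 : ((3 * 5 ^ r : ℕ) : ZMod (3 * 5 ^ r)) = 0 := ZMod.natCast_self _
    push_cast at h0 ⊢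
    linear_combination h0
  have key' : ∀ u v : V, G.Adj u v →
      h (Sum.inl v) = h (Sum.inl u) + ((5 ^ r : ℕ) : ZMod (3 * 5 ^ r)) ∨
      h (Sum.inl v) = h (Sum.inl u) + ((5 ^ r : ℕ) : ZMod (3 * 5 ^ r)) +
        ((5 ^ r : ℕ) : ZMod (3 * 5 ^ r)) := by
    intro u v huv
    obtain ⟨s, hs | hs, heq⟩ := key u v huv
    · left
      rw [heq, hs, Int.cast_natCast]
    · right
      rw [heq, hs, Int.cast_neg, Int.cast_natCast]
      linear_combination -h3
  have walk_claim : ∀ (u v : V) (w : G.Walk u v),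
      h (Sum.inl v) = h (Sum.inl u) ∨
      h (Sum.inl v) = h (Sum.inl u) + ((5 ^ r : ℕ) : ZMod (3 * 5 ^ r)) ∨
      h (Sum.inl v) = h (Sum.inl u) + ((5 ^ r : ℕ) : ZMod (3 * 5 ^ r)) +
        ((5 ^ r : ℕ) : ZMod (3 * 5 ^ r)) := by
    intro u v w
    induction w with
    | nil => exact Or.inl rfl
    | @cons a b v2 ha w ih =>
        rcases key' a b ha with h2 | h2 <;> rcases ih with h1 | h1 | h1 <;>
          rw [h1, h2] <;>
          first
            | exact Or.inl (by linear_combination)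
            | exact Or.inl (by linear_combination h3)
            | exact Or.inr (Or.inl (by linear_combination))
            | exact Or.inr (Or.inl (by linear_combination h3))
            | exact Or.inr (Or.inr (by linear_combination))
            | exact Or.inr (Or.inr (by linear_combination h3))
  obtain ⟨u₀⟩ := hconn.nonempty
  refine ⟨h (Sum.inl u₀), fun u => ?_⟩
  obtain ⟨w⟩ := hconn.preconnected u₀ u
  rcases walk_claim u₀ u w with h1 | h1 | h1
  · exact Or.inl h1
  · exact Or.inr (Or.inl h1)
  · refine Or.inr (Or.inr ?_)
    rw [h1, two_mul, add_assoc]
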